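/- Let K be a non-trivial conjugacy class of a finite group G such that KK⁻¹ = {1} ∪ D, where D is a conjugacy class of G. Then |D| divides |K|(|K|−1). -/

import Mathlib

open scoped Pointwise

theorem card_D_dvd_card_K_mul_card_K_sub_one
    {G : Type*} [Group G] [Finite G] (x d : G) (hx : x ≠ 1)
    (h : conjugatesOf x * (conjugatesOf x)⁻¹ = {1} ∪ conjugatesOf d) :
    (conjugatesOf d).ncard ∣ (conjugatesOf x).ncard * ((conjugatesOf x).ncard - 1) := by
  classical
  haveI : Fintype G := Fintype.ofFinite G
  rw [Set.ncard_eq_toFinset_card', Set.ncard_eq_toFinset_card']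
  set Kf : Finset G := (conjugatesOf x).toFinset with hKf
  set Df : Finset G := (conjugatesOf d).toFinset with hDf
  set S : Finset (G × G) := (Kf ×ˢ Kf).filter (fun p => p.1 ≠ p.2) with hS
  -- cardinality of S
  have hdiag : ((Kf ×ˢ Kf).filter (fun p => p.1 = p.2)) = Kf.image (fun a => (a, a)) := by
    ext ⟨a, b⟩
    simp only [Finset.mem_filter, Finset.mem_product, Finset.mem_image, Prod.mk.injEq]
    constructor
    · rintro ⟨⟨ha, _⟩, rfl⟩; exact ⟨a, ha, rfl, rfl⟩
    · rintro ⟨c, hc, rfl, rfl⟩; exact ⟨⟨hc, hc⟩, rfl⟩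
  have hdiagcard : ((Kf ×ˢ Kf).filter (fun p => p.1 = p.2)).card = Kf.card := by
    rw [hdiag, Finset.card_image_of_injective]
    intro a b hab; exact (Prod.mk.injEq _ _ _ _ ▸ hab).1
  have hsplit := Finset.card_filter_add_card_filter_not
    (s := Kf ×ˢ Kf) (p := fun p => p.1 = p.2)
  have hScard : S.card = Kf.card * (Kf.card - 1) := by
    have hprod : (Kf ×ˢ Kf).card = Kf.card * Kf.card := Finset.card_product _ _
    have : S.card = Kf.card * Kf.card - Kf.card := by
      have := hsplit
      rw [hdiagcard, hprod] at this
      have hSeq : (Finset.filter (fun p => ¬ p.1 = p.2) (Kf ×ˢ Kf)) = S := rfl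
      rw [hSeq] at this
      omega
    rw [this, Nat.mul_sub_one]
  -- map to D
  have hmem : ∀ p ∈ S, p.1 * p.2⁻¹ ∈ Df := by
    rintro ⟨a, b⟩ hp
    simp only [hS, Finset.mem_filter, Finset.mem_product, hKf, Set.mem_toFinset] at hp
    obtain ⟨⟨ha, hb⟩, hne⟩ := hp
    have hprod : a * b⁻¹ ∈ conjugatesOf x * (conjugatesOf x)⁻¹ :=
      Set.mul_mem_mul ha (Set.inv_mem_inv.2 hb)
    rw [h] at hprod
    rcases hprod with h1 | hD
    · exact absurd (by rwa [Set.mem_singleton_iff, mul_inv_eq_one] at h1) hne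
    · simpa [hDf, Set.mem_toFinset] using hD
  have key := Finset.card_eq_sum_card_fiberwise hmem
  -- fibers have constant cardinality
  have hfib : ∀ e ∈ Df, (S.filter (fun p => p.1 * p.2⁻¹ = e)).card
      = (S.filter (fun p => p.1 * p.2⁻¹ = d)).card := by
    intro e he
    have hconj : IsConj d e := by rw [hDf, Set.mem_toFinset] at he; exact he
    obtain ⟨g, hg⟩ := isConj_iff.1 hconj
    have hK : ∀ (g : G), ∀ a ∈ Kf, g * a * g⁻¹ ∈ Kf := by
      intro g a ha
      rw [hKf, Set.mem_toFinset] at ha ⊢; simp only [conjugatesOf, Set.mem_setOf_eq] at ha ⊢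
      exact ha.trans (isConj_iff.2 ⟨g, rfl⟩)
    symm
    refine Finset.card_bij' (fun p _ => (g * p.1 * g⁻¹, g * p.2 * g⁻¹))
      (fun q _ => (g⁻¹ * q.1 * g, g⁻¹ * q.2 * g)) ?_ ?_ ?_ ?_
    · rintro ⟨a, b⟩ hp
      simp only [hS, Finset.mem_filter, Finset.mem_product] at hp ⊢
      obtain ⟨⟨⟨ha, hb⟩, hne⟩, hab⟩ := hp
      refine ⟨⟨⟨hK g a ha, hK g b hb⟩, by simp [mul_left_cancel_iff, mul_right_cancel_iff]; exact hne⟩, ?_⟩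
      have : (g * a * g⁻¹) * (g * b * g⁻¹)⁻¹ = g * (a * b⁻¹) * g⁻¹ := by group
      rw [this, hab, hg]
    · rintro ⟨a, b⟩ hq
      simp only [hS, Finset.mem_filter, Finset.mem_product] at hq ⊢
      obtain ⟨⟨⟨ha, hb⟩, hne⟩, hab⟩ := hq
      have hKa := hK g⁻¹ a ha
      have hKb := hK g⁻¹ b hb
      rw [inv_inv] at hKa hKb
      refine ⟨⟨⟨hKa, hKb⟩, by simp [mul_left_cancel_iff, mul_right_cancel_iff]; exact hne⟩, ?_⟩
      have : (g⁻¹ * a * g) * (g⁻¹ * b * g)⁻¹ = g⁻¹ * (a * b⁻¹) * g := by group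
      rw [this, hab, ← hg]
      group
    · rintro ⟨a, b⟩ _; simp only [Prod.mk.injEq]; constructor <;> group
    · rintro ⟨a, b⟩ _; simp only [Prod.mk.injEq]; constructor <;> group
  rw [Finset.sum_congr rfl hfib, Finset.sum_const, smul_eq_mul] at key
  rw [← hScard]
  exact ⟨_, key⟩
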